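/- Let λ>0, T>0, k∈(0,1), κ = 1−k, and c ≥ 2 a natural number. Let G, L : ℝ → ℝ with L nondecreasing, and let a_1 ≥ a_2 ≥ … ≥ a_c be real numbers with G(a_n) ≥ 0 and L(a_n) ≥ 0 for all n = 1,…,c. Define the piecewise constant plan x : (0,T] → ℝ by x(t) = a_n for t ∈ [κ^n T, κ^{n−1}T), n = 1,…,c−1, and x(t) = a_c for t ∈ (0, κ^{c−1}T). Suppose the recurrence relation G(a_n)·e^{−λτ(n+1)} ≤ L(a_{n+1})·(1 − e^{−λτ(n+1)}) holds for every n = 1,…,c−1, where τ(n+1) = k·κ^n·T. Then for every t ∈ [κ^{c−1}T, T), the incentive constraint G(x(t))·e^{−λt} ≤ ∫_{(1−k)t}^{t} L(x(s))·λ·e^{−λs} ds holds. -/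

import Mathlib

open MeasureTheory intervalIntegral Set

lemma exp_int_aux (lam A a b : ℝ) :
    ∫ s in a..b, A * lam * Real.exp (-lam * s)
      = A * (Real.exp (-lam * a) - Real.exp (-lam * b)) := by
  have h : ∀ s ∈ Set.uIcc a b,
      HasDerivAt (fun u => -A * Real.exp (-lam * u)) (A * lam * Real.exp (-lam * s)) s := by
    intro s _
    have h1 : HasDerivAt (fun u : ℝ => -lam * u) (-lam) s := by
      simpa using (hasDerivAt_id s).const_mul (-lam)
    have h2 := (h1.exp).const_mul (-A)
    exact h2.congr_deriv (by ring)
  have hint : IntervalIntegrable (fun s => A * lam * Real.exp (-lam * s))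
      MeasureTheory.volume a b :=
    (Continuous.intervalIntegrable (continuous_const.mul (Real.continuous_exp.comp ((continuous_const).mul continuous_id))) a b)
  rw [intervalIntegral.integral_eq_sub_of_hasDerivAt h hint]
  ring

/-- (Sufficiency direction of Theorem 2.) If a nonincreasing action
sequence `a_1 ≥ … ≥ a_c` with `G(a_n) ≥ 0`, `L(a_n) ≥ 0` satisfies the recurrence
relation `G(a_n)·e^{-λτ(n+1)} ≤ L(a_{n+1})·(1 - e^{-λτ(n+1)})` where
`τ(n+1) = k·κ^n·T`, then the induced monotone piecewise constant plan satisfies the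
SPE incentive constraint throughout the first `c-1` slots, i.e. on `[κ^{c-1}T, T)`. -/
theorem stmt_4 (lam T k : ℝ) (hlam : 0 < lam) (hT : 0 < T) (hk : k ∈ Set.Ioo (0 : ℝ) 1)
    (κ : ℝ) (hκ : κ = 1 - k) (c : ℕ) (hc : 2 ≤ c)
    (G L : ℝ → ℝ) (hLmono : Monotone L)
    (a : ℕ → ℝ)
    (hdecr : ∀ n, 1 ≤ n → n + 1 ≤ c → a (n + 1) ≤ a n)
    (hGpos : ∀ n, 1 ≤ n → n ≤ c → 0 ≤ G (a n))
    (hLpos : ∀ n, 1 ≤ n → n ≤ c → 0 ≤ L (a n))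
    (x : ℝ → ℝ)
    (hx1 : ∀ n, 1 ≤ n → n ≤ c - 1 → ∀ t ∈ Set.Ico (κ ^ n * T) (κ ^ (n - 1) * T), x t = a n)
    (hx2 : ∀ t ∈ Set.Ioo (0 : ℝ) (κ ^ (c - 1) * T), x t = a c)
    (hrec : ∀ n, 1 ≤ n → n ≤ c - 1 →
      G (a n) * Real.exp (-lam * (k * κ ^ n * T))
        ≤ L (a (n + 1)) * (1 - Real.exp (-lam * (k * κ ^ n * T)))) :
    ∀ t ∈ Set.Ico (κ ^ (c - 1) * T) T,
      G (x t) * Real.exp (-lam * t)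
        ≤ ∫ s in ((1 - k) * t)..t, L (x s) * lam * Real.exp (-lam * s) := by
  obtain ⟨hk0, hk1⟩ := hk
  have hκ0 : 0 < κ := by rw [hκ]; linarith
  have hκ1 : κ < 1 := by rw [hκ]; linarith
  intro t ht
  obtain ⟨ht1, ht2⟩ := ht
  have htpos : 0 < t := lt_of_lt_of_le (by positivity) ht1
  -- find the slot index n
  have hex : ∃ m, 1 ≤ m ∧ κ ^ m * T ≤ t := ⟨c - 1, by omega, ht1⟩
  classical
  set n := Nat.find hex with hn
  obtain ⟨hn1, hnT⟩ : 1 ≤ n ∧ κ ^ n * T ≤ t := Nat.find_spec hex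
  have hnle : n ≤ c - 1 := Nat.find_min' hex ⟨by omega, ht1⟩
  have hn1c : n + 1 ≤ c := by omega
  -- t < κ^{n-1} T
  have htlt : t < κ ^ (n - 1) * T := by
    rcases Nat.eq_or_lt_of_le hn1 with h | h
    · simpa [← h] using ht2
    · have := Nat.find_min hex (m := n - 1) (by omega)
      push_neg at this
      exact this (by omega)
  have hxt : x t = a n := hx1 n hn1 hnle t ⟨hnT, htlt⟩
  set m := κ ^ n * T with hm
  have hκtm : κ * t < m := by
    have h1 : κ * t < κ * (κ ^ (n - 1) * T) := by
      exact (mul_lt_mul_iff_right₀ hκ0).2 htlt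
    have h2 : κ * (κ ^ (n - 1) * T) = m := by
      rw [hm]
      have : κ * κ ^ (n - 1) = κ ^ n := by
        rw [← pow_succ']
        congr 1
        omega
      rw [← this]; ring
    linarith [h2 ▸ h1]
  have hmt : m ≤ t := hnT
  have hκtpos : 0 < κ * t := by positivity
  -- value of x on (κ t, m)
  have hxs2 : ∀ s, κ * t < s → s < m → x s = a (n + 1) := by
    intro s hs1 hs2
    rcases Nat.eq_or_lt_of_le hnle with h | h
    · have hnc : n + 1 = c := by omega
      have hms : m = κ ^ (c - 1) * T := by rw [hm, h]
      rw [hnc]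
      exact hx2 s ⟨lt_trans hκtpos hs1, by rw [← hms]; exact hs2⟩
    · refine hx1 (n + 1) (by omega) (by omega) s ⟨?_, ?_⟩
      · have : κ ^ (n + 1) * T = κ * m := by rw [hm, pow_succ]; ring
        rw [this]
        have : κ * m ≤ κ * t := by
          exact (mul_le_mul_iff_right₀ hκ0).2 hmt
        linarith
      · simpa using hs2
  -- value of x on [m, t]
  have hxs1 : ∀ s, m ≤ s → s ≤ t → x s = a n := fun s hs1 hs2 =>
    hx1 n hn1 hnle s ⟨hs1, lt_of_le_of_lt hs2 htlt⟩
  -- the integrand and the constant versions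
  set f : ℝ → ℝ := fun s => L (x s) * lam * Real.exp (-lam * s) with hf
  set g1 : ℝ → ℝ := fun s => L (a (n + 1)) * lam * Real.exp (-lam * s) with hg1
  set g2 : ℝ → ℝ := fun s => L (a n) * lam * Real.exp (-lam * s) with hg2
  have hg1c : Continuous g1 := by
    rw [hg1]
    exact continuous_const.mul (Real.continuous_exp.comp ((continuous_const).mul continuous_id))
  have hg2c : Continuous g2 := by
    rw [hg2]
    exact continuous_const.mul (Real.continuous_exp.comp ((continuous_const).mul continuous_id))
  -- integrability of f on the two pieces
  have hi1 : IntervalIntegrable f volume (κ * t) m := by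
    rw [intervalIntegrable_iff_integrableOn_Ioc_of_le (le_of_lt hκtm),
      integrableOn_Ioc_iff_integrableOn_Ioo]
    refine (((hg1c.continuousOn).integrableOn_compact isCompact_Icc).mono_set Set.Ioo_subset_Icc_self).congr_fun ?_ measurableSet_Ioo
    intro s hs
    simp only [hf, hg1, hxs2 s hs.1 hs.2]
  have hi2 : IntervalIntegrable f volume m t := by
    rw [intervalIntegrable_iff_integrableOn_Ioc_of_le hmt]
    refine (((hg2c.continuousOn).integrableOn_compact isCompact_Icc).mono_set Set.Ioc_subset_Icc_self).congr_fun ?_ measurableSet_Ioc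
    intro s hs
    simp only [hf, hg2, hxs1 s (le_of_lt hs.1) hs.2]
  -- split the integral
  have hsplit : ∫ s in ((1 - k) * t)..t, f s
      = (∫ s in (κ * t)..m, f s) + ∫ s in m..t, f s := by
    rw [← hκ]
    exact (intervalIntegral.integral_add_adjacent_intervals hi1 hi2).symm
  -- compute the two pieces
  have hI1 : ∫ s in (κ * t)..m, f s
      = L (a (n + 1)) * (Real.exp (-lam * (κ * t)) - Real.exp (-lam * m)) := by
    rw [show (∫ s in (κ * t)..m, f s) = ∫ s in (κ * t)..m, g1 s from ?_]
    · exact exp_int_aux lam _ _ _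
    · refine intervalIntegral.integral_congr_ae ?_
      have hsing : ({m} : Set ℝ)ᶜ ∈ ae volume :=
        compl_mem_ae_iff.mpr (Real.volume_singleton)
      filter_upwards [hsing] with s hs hsI
      rw [Set.uIoc_of_le (le_of_lt hκtm)] at hsI
      have hsm : s < m := lt_of_le_of_ne hsI.2 (by simpa using hs)
      simp only [hf, hg1, hxs2 s hsI.1 hsm]
  have hI2 : ∫ s in m..t, f s
      = L (a n) * (Real.exp (-lam * m) - Real.exp (-lam * t)) := by
    rw [show (∫ s in m..t, f s) = ∫ s in m..t, g2 s from ?_]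
    · exact exp_int_aux lam _ _ _
    · refine intervalIntegral.integral_congr ?_
      intro s hs
      rw [Set.uIcc_of_le hmt] at hs
      simp only [hf, hg2, hxs1 s hs.1 hs.2]
  -- key inequality from the recurrence
  have hLpos' : 0 ≤ L (a (n + 1)) := hLpos (n + 1) (by omega) hn1c
  have hkey : G (a n) ≤ L (a (n + 1)) * (Real.exp (lam * k * t) - 1) := by
    have hr := hrec n hn1 hnle
    set u := lam * (k * κ ^ n * T) with hu
    have hu0 : 0 < u := by rw [hu]; positivity
    have h1 : G (a n) ≤ L (a (n + 1)) * (Real.exp u - 1) := by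
      have h2 := mul_le_mul_of_nonneg_right hr (le_of_lt (Real.exp_pos u))
      have h3 : Real.exp (-lam * (k * κ ^ n * T)) * Real.exp u = 1 := by
        rw [← Real.exp_add]; simp [hu]
      calc G (a n) = G (a n) * (Real.exp (-lam * (k * κ ^ n * T)) * Real.exp u) := by
            rw [h3]; ring
        _ = G (a n) * Real.exp (-lam * (k * κ ^ n * T)) * Real.exp u := by ring
        _ ≤ L (a (n + 1)) * (1 - Real.exp (-lam * (k * κ ^ n * T))) * Real.exp u := h2
        _ = L (a (n + 1)) * (Real.exp u - Real.exp (-lam * (k * κ ^ n * T)) * Real.exp u) := by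
            ring
        _ = L (a (n + 1)) * (Real.exp u - 1) := by rw [h3]
    have hum : u ≤ lam * k * t := by
      have : k * κ ^ n * T = k * m := by rw [hm]; ring
      rw [hu, this]
      have : lam * (k * m) ≤ lam * (k * t) := by
        have := mul_le_mul_of_nonneg_left hmt (le_of_lt hk0)
        exact mul_le_mul_of_nonneg_left this (le_of_lt hlam)
      linarith
    have := Real.exp_le_exp.2 hum
    nlinarith
  -- assemble everything
  rw [hxt]
  have hgoal := hsplit
  rw [hI1, hI2] at hgoal
  rw [show (∫ s in ((1 - k) * t)..t, L (x s) * lam * Real.exp (-lam * s))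
      = (∫ s in ((1 - k) * t)..t, f s) from rfl, hgoal]
  have hexpsplit : Real.exp (-lam * (κ * t))
      = Real.exp (-lam * t) * Real.exp (lam * k * t) := by
    rw [← Real.exp_add]
    congr 1
    rw [hκ]; ring
  rw [hexpsplit]
  have hEt : 0 < Real.exp (-lam * t) := Real.exp_pos _
  have hEmEt : Real.exp (-lam * t) ≤ Real.exp (-lam * m) := by
    apply Real.exp_le_exp.2
    nlinarith
  have hLle : L (a (n + 1)) ≤ L (a n) := hLmono (hdecr n hn1 hn1c)
  nlinarith [mul_le_mul_of_nonneg_right hkey (le_of_lt hEt),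
    mul_nonneg (sub_nonneg.2 hLle) (sub_nonneg.2 hEmEt)]
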